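/- Let G be a finite group, let g, h ∈ G with g ∉ N_G(⟨h⟩), and let m be the smallest positive integer such that g ∈ N_G(⟨h^m⟩). Let k be an integer with 1 ≤ k < o(h). Then the Bovdi units b_k(g,h̃) = h^k + (1-h)·g·h̃ and b_k(h̃,g) = h^k + h̃·g·(1-h) are units of the integral group ring ℤG, and if gcd(k,m) = 1 then both b_k(g,h̃) and b_k(h̃,g) have finite order equal to o(h^k) in the unit group U(ℤG). -/

import Mathlib

/-- `h̃ = ∑_{x ∈ ⟨h⟩} x` in the group ring `R G`, written as `∑_{i < o(h)} h^i`. -/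
noncomputable def grpTilde (R : Type*) [CommRing R] {G : Type*} [Group G] (h : G) :
    MonoidAlgebra R G :=
  ∑ i ∈ Finset.range (orderOf h), MonoidAlgebra.of R G (h ^ i)

/-- Bovdi unit `b_k(g, h̃) = h^k + (1 - h)·g·h̃`. -/
noncomputable def bovdiL (R : Type*) [CommRing R] {G : Type*} [Group G] (g h : G) (k : ℕ) :
    MonoidAlgebra R G :=
  MonoidAlgebra.of R G (h ^ k) +
    (1 - MonoidAlgebra.of R G h) * MonoidAlgebra.of R G g * grpTilde R h

/-- Bovdi unit `b_k(h̃, g) = h^k + h̃·g·(1 - h)`. -/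
noncomputable def bovdiR (R : Type*) [CommRing R] {G : Type*} [Group G] (g h : G) (k : ℕ) :
    MonoidAlgebra R G :=
  MonoidAlgebra.of R G (h ^ k) +
    grpTilde R h * MonoidAlgebra.of R G g * (1 - MonoidAlgebra.of R G h)

section helpers
open Finset

variable {G : Type*} [Group G] [Fintype G]

local notation "φ" => MonoidAlgebra.of ℤ G

private lemma sum_shift1 {M : Type*} [AddCommGroup M] (f : ℕ → M) (n : ℕ) (hf : f n = f 0) :
    ∑ i ∈ range n, f (i + 1) = ∑ i ∈ range n, f i := by
  have h2 := Finset.sum_range_succ f n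
  rw [Finset.sum_range_succ' f n, hf] at h2
  exact add_right_cancel h2

private lemma sum_shift {M : Type*} [AddCommGroup M] (f : ℕ → M) (n : ℕ)
    (hf : ∀ i, f (i + n) = f i) (c : ℕ) :
    ∑ i ∈ range n, f (i + c) = ∑ i ∈ range n, f i := by
  induction c with
  | zero => simp [MonoidAlgebra.one_def]
  | succ c ih =>
    have e1 : ∑ i ∈ range n, f (i + (c + 1)) = ∑ i ∈ range n, (fun j => f (j + c)) (i + 1) :=
      Finset.sum_congr rfl (fun i _ => by simp only []; congr 1; omega)
    rw [e1, sum_shift1 (fun j => f (j + c)) n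
      (by show f (n + c) = f (0 + c); rw [zero_add, Nat.add_comm, hf])]
    exact ih

private lemma tilde_mul_h (h : G) : grpTilde ℤ h * φ h = grpTilde ℤ h := by
  unfold grpTilde
  rw [Finset.sum_mul]
  rw [Finset.sum_congr rfl (fun i _ => by rw [← map_mul, ← pow_succ] :
    ∀ i ∈ range (orderOf h), φ (h ^ i) * φ h = (fun j => φ (h ^ j)) (i + 1))]
  exact sum_shift1 (fun j => φ (h ^ j)) (orderOf h) (by simp [pow_orderOf_eq_one])

private lemma h_mul_tilde (h : G) : φ h * grpTilde ℤ h = grpTilde ℤ h := by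
  unfold grpTilde
  rw [Finset.mul_sum]
  rw [Finset.sum_congr rfl (fun i _ => by rw [← map_mul, ← pow_succ'] :
    ∀ i ∈ range (orderOf h), φ h * φ (h ^ i) = (fun j => φ (h ^ j)) (i + 1))]
  exact sum_shift1 (fun j => φ (h ^ j)) (orderOf h) (by simp [pow_orderOf_eq_one])

private lemma tilde_mul_pow (h : G) (a : ℕ) : grpTilde ℤ h * φ (h ^ a) = grpTilde ℤ h := by
  induction a with
  | zero => rw [pow_zero, map_one, mul_one]
  | succ a ih => rw [pow_succ, map_mul, ← mul_assoc, ih, tilde_mul_h]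

private lemma pow_mul_tilde (h : G) (a : ℕ) : φ (h ^ a) * grpTilde ℤ h = grpTilde ℤ h := by
  induction a with
  | zero => rw [pow_zero, map_one, one_mul]
  | succ a ih => rw [pow_succ', map_mul, mul_assoc, ih, h_mul_tilde]

private lemma mem_pow (h : G) {c : G} (hc : c ∈ Subgroup.zpowers h) : ∃ a : ℕ, c = h ^ a := by
  obtain ⟨z, rfl⟩ := hc
  refine ⟨(z % (orderOf h : ℤ)).toNat, ?_⟩
  have ho : 0 < orderOf h := orderOf_pos h
  have hnn : 0 ≤ z % (orderOf h : ℤ) := Int.emod_nonneg z (by exact_mod_cast ho.ne')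
  rw [← zpow_natCast, Int.toNat_of_nonneg hnn, zpow_mod_orderOf]

private lemma tilde_mul_mem (h : G) {c : G} (hc : c ∈ Subgroup.zpowers h) :
    grpTilde ℤ h * φ c = grpTilde ℤ h := by
  obtain ⟨a, rfl⟩ := mem_pow h hc; exact tilde_mul_pow h a

private lemma mem_mul_tilde (h : G) {c : G} (hc : c ∈ Subgroup.zpowers h) :
    φ c * grpTilde ℤ h = grpTilde ℤ h := by
  obtain ⟨a, rfl⟩ := mem_pow h hc; exact pow_mul_tilde h a


private noncomputable def NL (g h : G) : MonoidAlgebra ℤ G :=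
  (1 - φ h) * φ g * grpTilde ℤ h

private noncomputable def NR (g h : G) : MonoidAlgebra ℤ G :=
  grpTilde ℤ h * φ g * (1 - φ h)

private lemma tilde_mul_one_sub (h : G) : grpTilde ℤ h * (1 - φ h) = 0 := by
  rw [mul_sub, mul_one, tilde_mul_h, sub_self]

private lemma one_sub_mul_tilde (h : G) : (1 - φ h) * grpTilde ℤ h = 0 := by
  rw [sub_mul, one_mul, h_mul_tilde, sub_self]

private lemma NL_mul_mem (g h : G) {c : G} (hc : c ∈ Subgroup.zpowers h) :
    NL g h * φ c = NL g h := by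
  unfold NL; rw [mul_assoc, tilde_mul_mem h hc]

private lemma mem_mul_NR (g h : G) {c : G} (hc : c ∈ Subgroup.zpowers h) :
    φ c * NR g h = NR g h := by
  unfold NR; rw [← mul_assoc, ← mul_assoc, mem_mul_tilde h hc]

private lemma NL_sq (g h : G) : NL g h * NL g h = 0 := by
  have hH : grpTilde ℤ h * NL g h = 0 := by
    unfold NL
    rw [← mul_assoc, ← mul_assoc, tilde_mul_one_sub, zero_mul, zero_mul]
  show (1 - φ h) * φ g * grpTilde ℤ h * NL g h = 0
  rw [mul_assoc, hH, mul_zero]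

private lemma NR_sq (g h : G) : NR g h * NR g h = 0 := by
  have hH : NR g h * grpTilde ℤ h = 0 := by
    unfold NR
    rw [mul_assoc, one_sub_mul_tilde, mul_zero]
  show NR g h * (grpTilde ℤ h * φ g * (1 - φ h)) = 0
  rw [← mul_assoc, ← mul_assoc, hH, zero_mul, zero_mul]


private lemma bovdiL_eq (g h : G) (k : ℕ) : bovdiL ℤ g h k = φ (h ^ k) + NL g h := rfl

private lemma bovdiR_eq (g h : G) (k : ℕ) : bovdiR ℤ g h k = φ (h ^ k) + NR g h := rfl

private lemma NL_mul_powh (g h : G) (a : ℕ) : NL g h * φ (h ^ a) = NL g h :=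
  NL_mul_mem g h (Subgroup.pow_mem _ (Subgroup.mem_zpowers h) a)

private lemma powh_mul_NR (g h : G) (a : ℕ) : φ (h ^ a) * NR g h = NR g h :=
  mem_mul_NR g h (Subgroup.pow_mem _ (Subgroup.mem_zpowers h) a)

private lemma bovdiL_pow (g h : G) (k j : ℕ) :
    (bovdiL ℤ g h k) ^ j
      = φ (h ^ (k * j)) + (∑ i ∈ range j, φ (h ^ (k * i))) * NL g h := by
  induction j with
  | zero => simp [MonoidAlgebra.one_def]
  | succ j ih =>
    rw [pow_succ, ih, bovdiL_eq, show k * (j + 1) = k * j + k from by ring,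
      Finset.sum_range_succ, add_mul (∑ i ∈ range j, φ (h ^ (k * i))) _ (NL g h),
      add_mul, mul_add, mul_add, ← map_mul, ← pow_add,
      mul_assoc _ (NL g h) (φ (h ^ k)), NL_mul_powh,
      mul_assoc _ (NL g h) (NL g h), NL_sq, mul_zero, add_zero]
    abel

private lemma bovdiR_pow (g h : G) (k j : ℕ) :
    (bovdiR ℤ g h k) ^ j
      = φ (h ^ (k * j)) + NR g h * (∑ i ∈ range j, φ (h ^ (k * i))) := by
  induction j with
  | zero => simp [MonoidAlgebra.one_def]
  | succ j ih =>
    rw [pow_succ', ih, bovdiR_eq, show k * (j + 1) = k + k * j from by ring,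
      Finset.sum_range_succ, mul_add (NR g h) _ (φ (h ^ (k * j))),
      mul_add, add_mul, add_mul, ← map_mul, ← pow_add,
      ← mul_assoc (φ (h ^ k)) (NR g h) _, powh_mul_NR,
      ← mul_assoc (NR g h) (NR g h) _, NR_sq, zero_mul, add_zero]
    abel

private lemma TNL_expand (g h : G) (k j : ℕ) :
    (∑ i ∈ range j, φ (h ^ (k * i))) * NL g h
      = ∑ i ∈ range j,
          (φ (h ^ (k * i) * g) * grpTilde ℤ h - φ (h ^ (k * i) * h * g) * grpTilde ℤ h) := by
  have hNL : NL g h = φ g * grpTilde ℤ h - φ h * (φ g * grpTilde ℤ h) := by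
    unfold NL; rw [sub_mul, one_mul, sub_mul, mul_assoc]
  rw [Finset.sum_mul]
  refine Finset.sum_congr rfl (fun i _ => ?_)
  rw [hNL, mul_sub, ← mul_assoc, ← map_mul, ← mul_assoc, ← mul_assoc, ← map_mul, ← map_mul]

private lemma NRT_expand (g h : G) (k j : ℕ) :
    NR g h * (∑ i ∈ range j, φ (h ^ (k * i)))
      = ∑ i ∈ range j,
          (grpTilde ℤ h * φ (g * h ^ (k * i)) - grpTilde ℤ h * φ (g * (h * h ^ (k * i)))) := by
  have hNR : NR g h = grpTilde ℤ h * φ g - grpTilde ℤ h * φ g * φ h := by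
    unfold NR; rw [mul_sub, mul_one]
  rw [Finset.mul_sum]
  refine Finset.sum_congr rfl (fun i _ => ?_)
  rw [hNR, sub_mul, mul_assoc, ← map_mul, mul_assoc, mul_assoc, ← map_mul, ← map_mul]


private lemma exists_shift (h : G) (k m : ℕ) (hm : 0 < m) (hco : Nat.gcd k m = 1) :
    ∃ (c : ℕ) (w : G), w ∈ Subgroup.zpowers (h ^ m) ∧ h ^ (k * c) = h * w := by
  have hcop : IsCoprime (k : ℤ) (m : ℤ) := by
    rw [Int.isCoprime_iff_gcd_eq_one]
    simpa using hco
  obtain ⟨a, b, hab⟩ := hcop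
  have hmz : (0 : ℤ) < m := by exact_mod_cast hm
  set c : ℕ := (a % m).toNat with hcdef
  have hca : (c : ℤ) = a % m := Int.toNat_of_nonneg (Int.emod_nonneg a hmz.ne')
  have he := Int.mul_ediv_add_emod a (m : ℤ)
  have hdvd : (m : ℤ) ∣ ((k : ℤ) * c - 1) := by
    refine ⟨-(k * (a / m)) - b, ?_⟩
    rw [hca]
    linear_combination (k : ℤ) * he + hab
  obtain ⟨z, hz⟩ := hdvd
  refine ⟨c, (h ^ m) ^ z, ⟨z, rfl⟩, ?_⟩
  have hkc : ((k * c : ℕ) : ℤ) = 1 + (m : ℤ) * z := by push_cast; linarith [hz]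
  calc h ^ (k * c) = h ^ ((k * c : ℕ) : ℤ) := (zpow_natCast h _).symm
    _ = h ^ ((1 : ℤ) + (m : ℤ) * z) := by rw [hkc]
    _ = h * (h ^ m) ^ z := by
        rw [zpow_add, zpow_one, zpow_mul, zpow_natCast]

private lemma key_vanish (g h : G) (k m : ℕ) (hm : 0 < m)
    (hgm : g ∈ Subgroup.normalizer (Subgroup.zpowers (h ^ m) : Set G))
    (hco : Nat.gcd k m = 1) :
    (∑ i ∈ range (orderOf (h ^ k)), φ (h ^ (k * i))) * NL g h = 0 ∧
      NR g h * (∑ i ∈ range (orderOf (h ^ k)), φ (h ^ (k * i))) = 0 := by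
  obtain ⟨c, w, hw, hc⟩ := exists_shift h k m hm hco
  set r := orderOf (h ^ k) with hrdef
  have hsub : Subgroup.zpowers (h ^ m) ≤ Subgroup.zpowers h :=
    Subgroup.zpowers_le.mpr (Subgroup.pow_mem _ (Subgroup.mem_zpowers h) m)
  have hwh : w ∈ Subgroup.zpowers h := hsub hw
  have hgw : g⁻¹ * w * g ∈ Subgroup.zpowers h := by
    have hginv : g⁻¹ ∈ Subgroup.normalizer (Subgroup.zpowers (h ^ m) : Set G) := inv_mem hgm
    have := (Subgroup.mem_normalizer_iff.mp hginv w).mp hw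
    rw [inv_inv] at this
    exact hsub this
  have hgw' : g * w * g⁻¹ ∈ Subgroup.zpowers h :=
    hsub ((Subgroup.mem_normalizer_iff.mp hgm w).mp hw)
  have hper : ∀ n : ℕ, h ^ (k * (n + r)) = h ^ (k * n) := by
    intro n
    rw [show k * (n + r) = k * n + k * r from by ring, pow_add, show h ^ (k * r) = 1 from ?_,
      mul_one]
    rw [pow_mul, pow_orderOf_eq_one]
  -- commutation of w with powers of h
  obtain ⟨zw, hzw⟩ := hwh
  have hcw : ∀ x : G, x ∈ Subgroup.zpowers h → w * x = x * w := by
    intro x hx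
    obtain ⟨zx, hzx⟩ := hx
    rw [← hzw, ← hzx]
    exact (Commute.zpow_zpow_self h zw zx).eq
  constructor
  · rw [TNL_expand, Finset.sum_sub_distrib]
    have key : ∀ i : ℕ, φ (h ^ (k * i) * h * g) * grpTilde ℤ h
        = (fun n => φ (h ^ (k * n) * g) * grpTilde ℤ h) (i + c) := by
      intro i
      have e : h ^ (k * (i + c)) * g = h ^ (k * i) * h * g * (g⁻¹ * w * g) := by
        rw [show k * (i + c) = k * i + k * c from by ring, pow_add, hc]
        group
      have h1 : φ (h ^ (k * (i + c)) * g)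
          = φ (h ^ (k * i) * h * g) * φ (g⁻¹ * w * g) := by
        rw [e]; exact map_mul _ _ _
      show _ = φ (h ^ (k * (i + c)) * g) * grpTilde ℤ h
      rw [h1, mul_assoc (φ (h ^ (k * i) * h * g)) (φ (g⁻¹ * w * g)) (grpTilde ℤ h),
        mem_mul_tilde h hgw]
    rw [Finset.sum_congr rfl (fun i _ => key i),
      sum_shift (fun n => φ (h ^ (k * n) * g) * grpTilde ℤ h) r
        (fun i => by
          show φ (h ^ (k * (i + r)) * g) * grpTilde ℤ h = φ (h ^ (k * i) * g) * grpTilde ℤ h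
          rw [hper]) c, sub_self]
  · rw [NRT_expand, Finset.sum_sub_distrib]
    have key : ∀ i : ℕ, grpTilde ℤ h * φ (g * (h * h ^ (k * i)))
        = (fun n => grpTilde ℤ h * φ (g * h ^ (k * n))) (i + c) := by
      intro i
      have hw2 : (h * w) * h ^ (k * i) = w * (h * h ^ (k * i)) := by
        rw [mul_assoc, hcw (h ^ (k * i)) (Subgroup.pow_mem _ (Subgroup.mem_zpowers h) _),
          ← mul_assoc,
          ← hcw (h * h ^ (k * i))
            (mul_mem (Subgroup.mem_zpowers h) (Subgroup.pow_mem _ (Subgroup.mem_zpowers h) _))]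
      have e : g * h ^ (k * (i + c)) = (g * w * g⁻¹) * (g * (h * h ^ (k * i))) := by
        rw [show k * (i + c) = k * c + k * i from by ring, pow_add, hc, hw2]
        group
      have h1 : φ (g * h ^ (k * (i + c)))
          = φ (g * w * g⁻¹) * φ (g * (h * h ^ (k * i))) := by
        rw [e]; exact map_mul _ _ _
      show _ = grpTilde ℤ h * φ (g * h ^ (k * (i + c)))
      rw [h1, ← mul_assoc (grpTilde ℤ h) (φ (g * w * g⁻¹)) _, tilde_mul_mem h hgw']
    rw [Finset.sum_congr rfl (fun i _ => key i),
      sum_shift (fun n => grpTilde ℤ h * φ (g * h ^ (k * n))) r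
        (fun i => by
          show grpTilde ℤ h * φ (g * h ^ (k * (i + r))) = grpTilde ℤ h * φ (g * h ^ (k * i))
          rw [hper]) c, sub_self]


private lemma coeffL_vanish (g h : G) (hgz : g ∉ Subgroup.zpowers h) {a : G}
    (ha : a ∈ Subgroup.zpowers h) {p : G} (hp : p ∈ Subgroup.zpowers h) :
    (φ (a * g) * grpTilde ℤ h).coeff p = 0 := by
  classical
  have hsum : φ (a * g) * grpTilde ℤ h = ∑ b ∈ range (orderOf h), φ (a * g * h ^ b) := by
    unfold grpTilde
    rw [Finset.mul_sum]
    exact Finset.sum_congr rfl (fun b _ => (map_mul _ _ _).symm)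
  rw [hsum, MonoidAlgebra.coeff_sum, Finsupp.finset_sum_apply]
  apply Finset.sum_eq_zero
  intro b _
  rw [MonoidAlgebra.of_apply, MonoidAlgebra.single_apply, if_neg]
  intro he
  apply hgz
  have hgeq : g = a⁻¹ * p * (h ^ b)⁻¹ := by rw [← he]; group
  rw [hgeq]
  exact mul_mem (mul_mem (inv_mem ha) hp)
    (inv_mem (Subgroup.pow_mem _ (Subgroup.mem_zpowers h) b))

private lemma coeffR_vanish (g h : G) (hgz : g ∉ Subgroup.zpowers h) {a : G}
    (ha : a ∈ Subgroup.zpowers h) {p : G} (hp : p ∈ Subgroup.zpowers h) :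
    (grpTilde ℤ h * φ (g * a)).coeff p = 0 := by
  classical
  have hsum : grpTilde ℤ h * φ (g * a) = ∑ b ∈ range (orderOf h), φ (h ^ b * (g * a)) := by
    unfold grpTilde
    rw [Finset.sum_mul]
    exact Finset.sum_congr rfl (fun b _ => (map_mul _ _ _).symm)
  rw [hsum, MonoidAlgebra.coeff_sum, Finsupp.finset_sum_apply]
  apply Finset.sum_eq_zero
  intro b _
  rw [MonoidAlgebra.of_apply, MonoidAlgebra.single_apply, if_neg]
  intro he
  apply hgz
  have hgeq : g = (h ^ b)⁻¹ * p * a⁻¹ := by rw [← he]; group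
  rw [hgeq]
  exact mul_mem (mul_mem (inv_mem (Subgroup.pow_mem _ (Subgroup.mem_zpowers h) b)) hp)
    (inv_mem ha)

private lemma pow_eq_one_of_eq_one (g h : G) (hgz : g ∉ Subgroup.zpowers h) (k j : ℕ)
    (hL : φ (h ^ (k * j)) + (∑ i ∈ range j, φ (h ^ (k * i))) * NL g h = 1 ∨
          φ (h ^ (k * j)) + NR g h * (∑ i ∈ range j, φ (h ^ (k * i))) = 1) :
    h ^ (k * j) = 1 := by
  classical
  by_contra hne
  have hmem : ∀ n : ℕ, h ^ n ∈ Subgroup.zpowers h :=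
    fun n => Subgroup.pow_mem _ (Subgroup.mem_zpowers h) n
  have hcoe : ∀ z : MonoidAlgebra ℤ G,
      (φ (h ^ (k * j)) + z = 1) → (z.coeff (h ^ (k * j)) = 0) → False := by
    intro z h1 h2
    have := congrArg (fun f : MonoidAlgebra ℤ G => f.coeff (h ^ (k * j))) h1
    rw [MonoidAlgebra.coeff_add, Finsupp.add_apply] at this
    rw [MonoidAlgebra.of_apply, MonoidAlgebra.single_apply, if_pos rfl, h2,
      MonoidAlgebra.one_def, MonoidAlgebra.single_apply,
      if_neg (fun hh => hne hh.symm)] at this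
    norm_num at this
  rcases hL with h1 | h1
  · refine hcoe _ h1 ?_
    rw [TNL_expand, MonoidAlgebra.coeff_sum, Finsupp.finset_sum_apply]
    apply Finset.sum_eq_zero
    intro i _
    rw [MonoidAlgebra.coeff_sub, Finsupp.sub_apply,
      coeffL_vanish g h hgz (hmem _) (hmem _),
      coeffL_vanish g h hgz (mul_mem (hmem (k * i)) (Subgroup.mem_zpowers h)) (hmem _),
      sub_self]
  · refine hcoe _ h1 ?_
    rw [NRT_expand, MonoidAlgebra.coeff_sum, Finsupp.finset_sum_apply]
    apply Finset.sum_eq_zero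
    intro i _
    rw [MonoidAlgebra.coeff_sub, Finsupp.sub_apply,
      coeffR_vanish g h hgz (hmem _) (hmem _),
      coeffR_vanish g h hgz (mul_mem (Subgroup.mem_zpowers h) (hmem (k * i))) (hmem _),
      sub_self]

end helpers

/-- Lemma 3.1(1): if `g ∉ N_G(⟨h⟩)`, `m` is the smallest positive integer with
`g ∈ N_G(⟨h^m⟩)`, and `1 ≤ k < o(h)`, then `b_k(g,h̃)` and `b_k(h̃,g)` are units of `ℤG`;
and if `gcd(k,m) = 1` they have finite order equal to `o(h^k)` in `U(ℤG)`. -/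
theorem stmt_5 {G : Type*} [Group G] [Fintype G] (g h : G)
    (hg : g ∉ Subgroup.normalizer (Subgroup.zpowers h : Set G))
    (m : ℕ) (hm : 0 < m) (hgm : g ∈ Subgroup.normalizer (Subgroup.zpowers (h ^ m) : Set G))
    (hmin : ∀ m' : ℕ, 0 < m' → g ∈ Subgroup.normalizer (Subgroup.zpowers (h ^ m') : Set G) → m ≤ m')
    (k : ℕ) (hk1 : 1 ≤ k) (hk2 : k < orderOf h) :
    IsUnit (bovdiL ℤ g h k) ∧ IsUnit (bovdiR ℤ g h k) ∧
      (Nat.gcd k m = 1 →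
        ∀ u : (MonoidAlgebra ℤ G)ˣ,
          ((↑u : MonoidAlgebra ℤ G) = bovdiL ℤ g h k ∨
            (↑u : MonoidAlgebra ℤ G) = bovdiR ℤ g h k) →
          orderOf u = orderOf (h ^ k)) := by
  classical
  have hgz : g ∉ Subgroup.zpowers h := fun hmem => hg (Subgroup.le_normalizer hmem)
  have hxy : MonoidAlgebra.of ℤ G (h ^ k) * MonoidAlgebra.of ℤ G ((h ^ k)⁻¹) = 1 := by
    rw [← map_mul, mul_inv_cancel, map_one]
  have hyx : MonoidAlgebra.of ℤ G ((h ^ k)⁻¹) * MonoidAlgebra.of ℤ G (h ^ k) = 1 := by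
    rw [← map_mul, inv_mul_cancel, map_one]
  have hinv_mem : (h ^ k)⁻¹ ∈ Subgroup.zpowers h :=
    inv_mem (Subgroup.pow_mem _ (Subgroup.mem_zpowers h) k)
  have hNy : NL g h * MonoidAlgebra.of ℤ G ((h ^ k)⁻¹) = NL g h := NL_mul_mem g h hinv_mem
  have hNx : NL g h * MonoidAlgebra.of ℤ G (h ^ k) = NL g h := NL_mul_powh g h k
  have hyN : MonoidAlgebra.of ℤ G ((h ^ k)⁻¹) * NR g h = NR g h := mem_mul_NR g h hinv_mem
  have hxN : MonoidAlgebra.of ℤ G (h ^ k) * NR g h = NR g h := powh_mul_NR g h k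
  refine ⟨⟨⟨bovdiL ℤ g h k, MonoidAlgebra.of ℤ G ((h ^ k)⁻¹) * (1 - NL g h), ?_, ?_⟩, rfl⟩,
    ⟨⟨bovdiR ℤ g h k, (1 - NR g h) * MonoidAlgebra.of ℤ G ((h ^ k)⁻¹), ?_, ?_⟩, rfl⟩, ?_⟩
  · rw [bovdiL_eq, ← mul_assoc, add_mul, hxy, hNy, mul_sub, mul_one, add_mul, one_mul,
      NL_sq, add_zero, add_sub_cancel_right]
  · rw [bovdiL_eq, mul_assoc, sub_mul, one_mul, mul_add, hNx, NL_sq, add_zero,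
      add_sub_cancel_right, hyx]
  · rw [bovdiR_eq, ← mul_assoc, mul_sub, mul_one, add_mul, hxN, NR_sq, add_zero,
      add_sub_cancel_right, hxy]
  · rw [bovdiR_eq, mul_assoc, mul_add, hyx, hyN, sub_mul, one_mul, mul_add, mul_one,
      NR_sq, add_zero, add_sub_cancel_right]
  · intro hco u hu
    have hvan := key_vanish g h k m hm hgm hco
    rcases hu with huL | huR
    · have hval : ∀ j : ℕ, (↑(u ^ j) : MonoidAlgebra ℤ G)
          = MonoidAlgebra.of ℤ G (h ^ (k * j))
            + (∑ i ∈ Finset.range j, MonoidAlgebra.of ℤ G (h ^ (k * i))) * NL g h :=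
        fun j => by rw [Units.val_pow_eq_pow_val, huL, bovdiL_pow]
      refine Nat.dvd_antisymm ?_ ?_
      · apply orderOf_dvd_of_pow_eq_one
        apply Units.ext
        rw [hval, hvan.1, add_zero, pow_mul, pow_orderOf_eq_one, map_one, Units.val_one]
      · apply orderOf_dvd_of_pow_eq_one
        rw [← pow_mul]
        apply pow_eq_one_of_eq_one g h hgz k (orderOf u)
        left
        rw [← hval, pow_orderOf_eq_one, Units.val_one]
    · have hval : ∀ j : ℕ, (↑(u ^ j) : MonoidAlgebra ℤ G)
          = MonoidAlgebra.of ℤ G (h ^ (k * j))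
            + NR g h * (∑ i ∈ Finset.range j, MonoidAlgebra.of ℤ G (h ^ (k * i))) :=
        fun j => by rw [Units.val_pow_eq_pow_val, huR, bovdiR_pow]
      refine Nat.dvd_antisymm ?_ ?_
      · apply orderOf_dvd_of_pow_eq_one
        apply Units.ext
        rw [hval, hvan.2, add_zero, pow_mul, pow_orderOf_eq_one, map_one, Units.val_one]
      · apply orderOf_dvd_of_pow_eq_one
        rw [← pow_mul]
        apply pow_eq_one_of_eq_one g h hgz k (orderOf u)
        right
        rw [← hval, pow_orderOf_eq_one, Units.val_one]
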